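/- Let C be a triangulated category. The assignments N ↦ S(N) (the class of morphisms whose cone lies in N) and S ↦ N(S) (the class of objects sent to zero objects by the localization functor Q : C → C[S⁻¹]) are mutually inverse bijections between the null systems in C and the S-systems in C; that is, N(S(N)) = N for every null system N, and S(N(S)) = S for every S-system S. -/

import Mathlib

open CategoryTheory Limits Pretriangulated ZeroObject

universe v u

variable {C : Type u} [Category.{v} C] [HasZeroObject C] [HasShift C ℤ] [Preadditive C]
  [∀ n : ℤ, (shiftFunctor C n).Additive] [Pretriangulated C]

/-- A null system in a triangulated category: it contains `0`, is stable under the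
translation and its inverse, is closed under cones of morphisms between its objects,
and contains the direct summands of all of its objects. -/
structure IsNullSystem (N : Set C) : Prop where
  zero : (0 : C) ∈ N
  shift : ∀ X : C, X ∈ N ↔ (X⟦(1 : ℤ)⟧ ∈ N)
  tri : ∀ T : Triangle C, (T ∈ distTriang C) → T.obj₁ ∈ N → T.obj₂ ∈ N → T.obj₃ ∈ N
  summand : ∀ (X Y : C) (b : BinaryBicone X Y), b.IsBilimit → b.pt ∈ N → X ∈ N ∧ Y ∈ N

/-- An S-system in a triangulated category: a localizing class (multiplicative system
with a calculus of left and of right fractions) compatible with the triangulation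
(stable under shifts, and commutative squares between distinguished triangles with
vertical morphisms in `S` can be completed by a third morphism in `S`) and saturated
(`s ∈ S` iff the localization functor `Q` sends `s` to an isomorphism). -/
class SSystem (S : MorphismProperty C) : Prop where
  left : S.HasLeftCalculusOfFractions
  right : S.HasRightCalculusOfFractions
  compat : S.IsCompatibleWithTriangulation
  saturated : ∀ ⦃X Y : C⦄ (f : X ⟶ Y), S f ↔ IsIso (S.Q.map f)

instance (S : MorphismProperty C) [h : SSystem S] : S.HasLeftCalculusOfFractions := h.left
instance (S : MorphismProperty C) [h : SSystem S] : S.HasRightCalculusOfFractions := h.right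
instance (S : MorphismProperty C) [h : SSystem S] : S.IsCompatibleWithTriangulation := h.compat

/-- `S(N)`: the class of morphisms `f` admitting a distinguished triangle over `f`
whose cone lies in `N`. -/
def coneClass (N : Set C) : MorphismProperty C := fun X Y f =>
  ∃ (Z : C) (g : Y ⟶ Z) (h : Z ⟶ X⟦(1 : ℤ)⟧),
    (Triangle.mk f g h ∈ distTriang C) ∧ Z ∈ N

open CategoryTheory.Category CategoryTheory.Preadditive
set_option linter.unusedSectionVars false
set_option maxHeartbeats 1000000

namespace IsNullSystem

variable {N : Set C} (hN : IsNullSystem N)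
include hN

lemma mem_of_iso {X Y : C} (e : X ≅ Y) (hX : X ∈ N) : Y ∈ N := by
  let b : BinaryBicone Y (0 : C) :=
    { pt := X
      fst := e.hom
      snd := 0
      inl := e.inv
      inr := 0
      inl_fst := e.inv_hom_id
      inl_snd := comp_zero
      inr_fst := zero_comp
      inr_snd := (isZero_zero C).eq_of_src _ _ }
  have hb : b.IsBilimit := isBinaryBilimitOfTotal b (by simp [b])
  exact (hN.summand Y 0 b hb hX).1

lemma shift_mem {X : C} (hX : X ∈ N) : X⟦(1 : ℤ)⟧ ∈ N := (hN.shift X).1 hX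

lemma mem_of_shift {X : C} (hX : X⟦(1 : ℤ)⟧ ∈ N) : X ∈ N := (hN.shift X).2 hX

lemma shift_neg_mem {X : C} (hX : X ∈ N) : X⟦(-1 : ℤ)⟧ ∈ N := by
  refine (hN.shift _).2 (hN.mem_of_iso ((shiftEquiv C (1 : ℤ)).counitIso.app X).symm hX)

lemma ext₃ {T : Triangle C} (hT : T ∈ distTriang C) (h₁ : T.obj₁ ∈ N) (h₂ : T.obj₂ ∈ N) :
    T.obj₃ ∈ N := hN.tri T hT h₁ h₂

lemma ext₁ {T : Triangle C} (hT : T ∈ distTriang C) (h₂ : T.obj₂ ∈ N) (h₃ : T.obj₃ ∈ N) :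
    T.obj₁ ∈ N :=
  hN.mem_of_shift (hN.tri _ (rot_of_distTriang _ hT) h₂ h₃)

lemma ext₂ {T : Triangle C} (hT : T ∈ distTriang C) (h₁ : T.obj₁ ∈ N) (h₃ : T.obj₃ ∈ N) :
    T.obj₂ ∈ N :=
  hN.tri _ (inv_rot_of_distTriang _ hT) (hN.shift_neg_mem h₃) h₁

lemma sum_mem {X Y : C} (hX : X ∈ N) (hY : Y ∈ N) : (X ⊞ Y : C) ∈ N :=
  hN.ext₂ (binaryBiproductTriangle_distinguished X Y) hX hY

/-- the retract lemma : a direct summand (given by a retraction) of an object of `N` is in `N` -/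
lemma mem_of_retract {E F : C} (r : E ⟶ F) (σ : F ⟶ E) (hr : r ≫ σ = 𝟙 E) (hF : F ∈ N) :
    E ∈ N := by
  obtain ⟨G, k, l, hT⟩ := distinguished_cocone_triangle r
  have hl : l = 0 := by
    obtain ⟨c, _, hc₂⟩ := complete_distinguished_triangle_morphism _ _ hT
      (contractible_distinguished E) (𝟙 E) σ (by exact hr.trans (comp_id _).symm)
    have hc₂' : l ≫ (shiftFunctor C 1).map (𝟙 E) = 0 := hc₂.trans comp_zero
    rw [CategoryTheory.Functor.map_id, comp_id] at hc₂'
    exact hc₂'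
  set T := Triangle.mk r k l with hTdef
  have := T.epi₂ hT hl
  have := isSplitEpi_of_epi T.mor₂
  obtain ⟨fst, hfst⟩ := T.coyoneda_exact₂ hT (𝟙 T.obj₂ - T.mor₂ ≫ section_ T.mor₂) (by simp)
  let d := binaryBiproductData _ hT hl (section_ T.mor₂) (by simp) fst
    (by simp only [← hfst, sub_add_cancel])
  exact (hN.summand _ _ d.bicone d.isBilimit hF).1

end IsNullSystem

namespace IsNullSystem

variable {N : Set C} (hN : IsNullSystem N)

lemma coneClass_mk {T : Triangle C} (hT : T ∈ distTriang C) (h₃ : T.obj₃ ∈ N) :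
    coneClass N T.mor₁ :=
  ⟨T.obj₃, T.mor₂, T.mor₃, hT, h₃⟩

include hN

lemma cone_mem {X Y Z' : C} {f : X ⟶ Y} {g' : Y ⟶ Z'} {h' : Z' ⟶ X⟦(1 : ℤ)⟧}
    (hT : Triangle.mk f g' h' ∈ distTriang C) (hf : coneClass N f) : Z' ∈ N := by
  obtain ⟨Z, g, h, hT', hZ⟩ := hf
  obtain ⟨e, -⟩ := exists_iso_of_arrow_iso _ _ hT' hT (Iso.refl (Arrow.mk f))
  exact hN.mem_of_iso (Triangle.π₃.mapIso e) hZ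

lemma coneClass_of_arrow_iso {X Y X' Y' : C} {f : X ⟶ Y} {f' : X' ⟶ Y'}
    (e : Arrow.mk f ≅ Arrow.mk f') (hf : coneClass N f) : coneClass N f' := by
  obtain ⟨Z, g, h, hT, hZ⟩ := hf
  obtain ⟨Z', g', h', hT'⟩ := distinguished_cocone_triangle f'
  obtain ⟨e', -⟩ := exists_iso_of_arrow_iso _ _ hT hT' e
  exact ⟨Z', g', h', hT', hN.mem_of_iso (Triangle.π₃.mapIso e') hZ⟩

lemma coneClass_smul {X Y : C} {f : X ⟶ Y} (n : ℤˣ) (hf : coneClass N f) :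
    coneClass N (n • f) :=
  hN.coneClass_of_arrow_iso (Arrow.isoMk ((n⁻¹ : ℤˣ) • Iso.refl X) (Iso.refl Y) (by simp [smul_smul])) hf

lemma coneClass_shift {X Y : C} {f : X ⟶ Y} (hf : coneClass N f) :
    coneClass N (f⟦(1 : ℤ)⟧') := by
  obtain ⟨Z, g, h, hT, hZ⟩ := hf
  have h1 : coneClass N ((1 : ℤ).negOnePow • f⟦(1 : ℤ)⟧') :=
    ⟨_, _, _, Triangle.shift_distinguished _ hT 1, hN.shift_mem hZ⟩
  have := hN.coneClass_smul ((1 : ℤ).negOnePow)⁻¹ h1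
  simpa using this

lemma coneClass_to_zero {X : C} (hX : X ∈ N) : coneClass N (0 : X ⟶ 0) := by
  have := rot_of_distTriang _ (contractible_distinguished X)
  exact ⟨_, _, _, this, hN.shift_mem hX⟩

lemma target_mem {X Y : C} {f : X ⟶ Y} (hf : coneClass N f) (hX : X ∈ N) : Y ∈ N := by
  obtain ⟨Z, g, h, hT, hZ⟩ := hf
  exact hN.ext₂ hT hX hZ

lemma source_mem {X Y : C} {f : X ⟶ Y} (hf : coneClass N f) (hY : Y ∈ N) : X ∈ N := by
  obtain ⟨Z, g, h, hT, hZ⟩ := hf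
  exact hN.ext₁ hT hY hZ

end IsNullSystem

/-- Chains of composable morphisms in `W`, of a given length. -/
inductive CompChain (W : MorphismProperty C) : ℕ → ∀ {X Y : C}, (X ⟶ Y) → Prop
  | id (X : C) : CompChain W 0 (𝟙 X)
  | comp {X Y Z : C} {f : X ⟶ Y} {g : Y ⟶ Z} {n : ℕ} :
      CompChain W n f → W g → CompChain W (n + 1) (f ≫ g)

namespace IsNullSystem

variable {N : Set C} (hN : IsNullSystem N)
include hN

lemma compChain_shift {n : ℕ} {X Y : C} {f : X ⟶ Y}
    (hf : CompChain (coneClass N) n f) : CompChain (coneClass N) n (f⟦(1 : ℤ)⟧') := by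
  induction hf with
  | id X => rw [CategoryTheory.Functor.map_id]; exact CompChain.id _
  | comp hf hg ihf => rw [Functor.map_comp]; exact ihf.comp (hN.coneClass_shift hg)

/-- The key lemma: if a finite composition of morphisms whose cones lie in `N`
factors through an object of `N`, then its source lies in `N`. -/
lemma mem_of_chain_factor (n : ℕ) : ∀ {X Y : C} (s : X ⟶ Y),
    CompChain (coneClass N) n s → ∀ {P : C}, P ∈ N →
    ∀ (h : X ⟶ P) (q : P ⟶ Y), h ≫ q = s → X ∈ N := by
  induction n with
  | zero =>
    intro X Y s hs P hP h q hq
    cases hs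
    exact hN.mem_of_retract h q hq hP
  | succ m ih =>
    intro X Y s hs P hP h q hq
    cases hs with
    | comp hτ hw =>
    rename_i B τ w
    -- s = τ ≫ w with `CompChain m τ` and `coneClass N w`
    obtain ⟨Zw, p, dd, hTw, hZw⟩ := hw
    set Tw := Triangle.mk w p dd with hTwdef
    -- the triangle over ω := q ≫ p
    obtain ⟨M, x, y, hO⟩ := distinguished_cocone_triangle (q ≫ p)
    set O := Triangle.mk (q ≫ p) x y with hOdef
    have hM : M ∈ N := hN.tri O hO hP hZw
    -- complete (q, 𝟙) to a morphism of triangles O ⟶ Tw.rotate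
    obtain ⟨π, hπ₁, hπ₂⟩ := complete_distinguished_triangle_morphism O Tw.rotate hO
      (rot_of_distTriang _ hTw) q (𝟙 Zw) (by exact comp_id _)
    dsimp [O, Tw] at hπ₁ hπ₂
    replace hπ₁ : x ≫ π = dd := hπ₁.trans (id_comp _)
    replace hπ₂ : y ≫ q⟦(1 : ℤ)⟧' = π ≫ (-w⟦(1 : ℤ)⟧') := hπ₂
    change M ⟶ B⟦(1 : ℤ)⟧ at π
    -- lift h⟦1⟧ through y
    have hwp : w ≫ p = 0 := comp_distTriang_mor_zero₁₂ _ hTw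
    obtain ⟨ι, hι⟩ := Triangle.coyoneda_exact₁ O hO (h⟦(1 : ℤ)⟧') (by
      dsimp [O]
      have : h ≫ q ≫ p = 0 := by rw [← assoc, hq, assoc, hwp, comp_zero]
      exact ((shiftFunctor C (1 : ℤ)).map_comp h (q ≫ p)).symm.trans
        ((congrArg (shiftFunctor C (1 : ℤ)).map this).trans (Functor.map_zero _ _ _)))
    dsimp [O] at hι
    change _ ⟶ M at ι
    replace hι : h⟦(1 : ℤ)⟧' = ι ≫ y := hι
    -- the key identity : (τ⟦1⟧ + ι ≫ π) kills w⟦1⟧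
    have hψ : (τ⟦(1 : ℤ)⟧' + ι ≫ π) ≫ w⟦(1 : ℤ)⟧' = 0 := by
      have h1 : π ≫ w⟦(1 : ℤ)⟧' = -(y ≫ q⟦(1 : ℤ)⟧') := by
        exact (neg_neg _).symm.trans (congrArg Neg.neg ((comp_neg _ _).symm.trans hπ₂.symm))
      rw [add_comp, assoc, h1, comp_neg, ← assoc, ← hι, ← Functor.map_comp, ← Functor.map_comp,
        hq, add_neg_eq_zero]
    -- factor τ⟦1⟧ + ι ≫ π through dd
    obtain ⟨g, hg⟩ := Triangle.coyoneda_exact₁ Tw hTw (τ⟦(1 : ℤ)⟧' + ι ≫ π) hψ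
    dsimp [Tw] at hg
    change _ ⟶ Zw at g
    replace hg : τ⟦(1 : ℤ)⟧' + ι ≫ π = g ≫ dd := hg
    -- hence τ⟦1⟧ factors through Zw ⊞ M ∈ N
    have hfac : biprod.lift g ι ≫ biprod.desc dd (-π) = τ⟦(1 : ℤ)⟧' := by
      rw [biprod.lift_desc, comp_neg]
      rw [← hg]
      abel
    have := ih (τ⟦(1 : ℤ)⟧') (hN.compChain_shift hτ) (hN.sum_mem hZw hM) _ _ hfac
    exact hN.mem_of_shift this

end IsNullSystem

namespace IsNullSystem

variable {N : Set C} (hN : IsNullSystem N)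
include hN

/-- left Ore condition for `coneClass N` (no octahedron axiom needed) -/
lemma coneClass_ore {X X' Y : C} (s : X ⟶ X') (hs : coneClass N s) (u : X ⟶ Y) :
    ∃ (Y' : C) (s' : Y ⟶ Y') (u' : X' ⟶ Y'), coneClass N s' ∧ u ≫ s' = s ≫ u' := by
  obtain ⟨Z, f, g, H, mem⟩ := hs
  obtain ⟨Y', s', f', mem'⟩ := distinguished_cocone_triangle₂ (g ≫ u⟦(1 : ℤ)⟧')
  obtain ⟨b, hb₁, -⟩ := complete_distinguished_triangle_morphism₂ (Triangle.mk s f g)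
    (Triangle.mk s' f' (g ≫ u⟦(1 : ℤ)⟧')) H mem' u (𝟙 Z) (by exact (id_comp _).symm)
  exact ⟨Y', s', b, ⟨Z, f', g ≫ u⟦(1 : ℤ)⟧', mem', mem⟩, hb₁.symm⟩

/-- left cancellability for `coneClass N` (no octahedron axiom needed) -/
lemma coneClass_ext {X' X Y : C} (s : X' ⟶ X) (hs : coneClass N s) (f₁ f₂ : X ⟶ Y)
    (hf : s ≫ f₁ = s ≫ f₂) :
    ∃ (Y' : C) (r : Y ⟶ Y'), coneClass N r ∧ f₁ ≫ r = f₂ ≫ r := by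
  obtain ⟨Z, g, h, H, mem⟩ := hs
  have hf₂ : s ≫ (f₁ - f₂) = 0 := by rw [comp_sub, hf, sub_self]
  obtain ⟨q, hq⟩ := Triangle.yoneda_exact₂ _ H _ hf₂
  obtain ⟨Y', r, t, mem'⟩ := distinguished_cocone_triangle q
  refine ⟨Y', r, ⟨_, _, _, rot_of_distTriang _ mem', hN.shift_mem mem⟩, ?_⟩
  have eq : q ≫ r = 0 := comp_distTriang_mor_zero₁₂ _ mem'
  replace hq : f₁ - f₂ = g ≫ q := hq
  rw [← sub_eq_zero, ← sub_comp, hq]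
  exact (assoc g q r).trans ((congrArg (fun k => g ≫ k) eq).trans comp_zero)

end IsNullSystem

/-- the multiplicative closure of a class of morphisms -/
def mclosure (W : MorphismProperty C) : MorphismProperty C := fun _ _ f => ∃ n, CompChain W n f

namespace mclosure

variable {W : MorphismProperty C}

lemma id_mem (X : C) : mclosure W (𝟙 X) := ⟨0, CompChain.id X⟩

lemma of_mem {X Y : C} {f : X ⟶ Y} (hf : W f) : mclosure W f := by
  have := CompChain.comp (CompChain.id X) hf
  rw [id_comp] at this
  exact ⟨1, this⟩

lemma comp_mem_aux {n : ℕ} {Y Z : C} {g : Y ⟶ Z} (hg : CompChain W n g) :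
    ∀ {X : C} (f : X ⟶ Y), mclosure W f → mclosure W (f ≫ g) := by
  induction hg with
  | id A => intro X f hf; simpa using hf
  | comp hg' hw ih =>
    intro X f hf
    rw [← assoc]
    obtain ⟨k, hk⟩ := ih f hf
    exact ⟨k + 1, hk.comp hw⟩

lemma comp_mem {X Y Z : C} {f : X ⟶ Y} {g : Y ⟶ Z} (hf : mclosure W f) (hg : mclosure W g) :
    mclosure W (f ≫ g) := by
  obtain ⟨n, hg⟩ := hg
  exact comp_mem_aux hg f hf

instance : (mclosure W).IsMultiplicative where
  id_mem := id_mem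
  comp_mem _ _ hf hg := comp_mem hf hg

end mclosure

namespace IsNullSystem

variable {N : Set C} (hN : IsNullSystem N)
include hN

lemma mclosure_ore {X X' Y : C} {s : X ⟶ X'} (hs : mclosure (coneClass N) s) (u : X ⟶ Y) :
    ∃ (Y' : C) (s' : Y ⟶ Y') (u' : X' ⟶ Y'),
      mclosure (coneClass N) s' ∧ u ≫ s' = s ≫ u' := by
  obtain ⟨n, hs⟩ := hs
  induction hs with
  | id A => exact ⟨Y, 𝟙 Y, u, mclosure.id_mem Y, by rw [comp_id, id_comp]⟩
  | comp hs₀ hw ih =>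
    rename_i B s₀ w _
    obtain ⟨Y₀, s₀', u₀', hs₀', hcomm⟩ := ih u
    obtain ⟨Y₁, t₁, u₁, ht₁, hcomm₂⟩ := hN.coneClass_ore w hw u₀'
    refine ⟨Y₁, s₀' ≫ t₁, u₁, mclosure.comp_mem hs₀' (mclosure.of_mem ht₁), ?_⟩
    rw [← assoc, hcomm, assoc, hcomm₂, ← assoc]

lemma mclosure_ext {X' X : C} {s : X' ⟶ X} (hs : mclosure (coneClass N) s) :
    ∀ {Y : C} (f₁ f₂ : X ⟶ Y), s ≫ f₁ = s ≫ f₂ →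
      ∃ (Y' : C) (r : Y ⟶ Y'), mclosure (coneClass N) r ∧ f₁ ≫ r = f₂ ≫ r := by
  obtain ⟨n, hs⟩ := hs
  induction hs with
  | id A =>
    intro Y f₁ f₂ hf
    simp only [id_comp] at hf
    exact ⟨Y, 𝟙 Y, mclosure.id_mem Y, by rw [hf]⟩
  | comp hs₀ hw ih =>
    rename_i B s₀ w _
    intro Y f₁ f₂ hf
    obtain ⟨Y₀, r₀, hr₀, h₀⟩ := ih (w ≫ f₁) (w ≫ f₂) (by
      rw [← assoc, ← assoc]; exact hf)
    obtain ⟨Y₁, r₁, hr₁, h₁⟩ := hN.coneClass_ext w hw (f₁ ≫ r₀) (f₂ ≫ r₀) (by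
      rw [← assoc, ← assoc]
      simpa using h₀)
    exact ⟨Y₁, r₀ ≫ r₁, mclosure.comp_mem hr₀ (mclosure.of_mem hr₁),
      by rw [← assoc, ← assoc]; simpa using h₁⟩

lemma mclosure_hasLeftCalculusOfFractions :
    (mclosure (coneClass N)).HasLeftCalculusOfFractions where
  exists_leftFraction X Y φ := by
    obtain ⟨Y', s', u', hs', hcomm⟩ := hN.mclosure_ore φ.hs φ.f
    exact ⟨MorphismProperty.LeftFraction.mk u' s' hs', hcomm⟩
  ext X' X Y f₁ f₂ s hs hf := by
    obtain ⟨Y', r, hr, h⟩ := hN.mclosure_ext ⟨hs.choose, hs.choose_spec⟩ f₁ f₂ hf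
    exact ⟨Y', r, hr, h⟩

end IsNullSystem

section ZeroLocalization

variable (W₀ : MorphismProperty C)

/-- the canonical morphism from `Q.obj 0` to any object of the localization -/
noncomputable def toObj (A : W₀.Localization) : W₀.Q.obj (0 : C) ⟶ A :=
  W₀.Q.map (0 : (0 : C) ⟶ ((Localization.Construction.objEquiv W₀).symm A)) ≫
    eqToHom ((Localization.Construction.objEquiv W₀).apply_symm_apply A)

/-- the canonical morphism to `Q.obj 0` from any object of the localization -/
noncomputable def fromObj (A : W₀.Localization) : A ⟶ W₀.Q.obj (0 : C) :=
  eqToHom ((Localization.Construction.objEquiv W₀).apply_symm_apply A).symm ≫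
    W₀.Q.map (0 : ((Localization.Construction.objEquiv W₀).symm A) ⟶ (0 : C))

lemma toObj_Q (X : C) : toObj W₀ (W₀.Q.obj X) = W₀.Q.map (0 : (0 : C) ⟶ X) := by
  dsimp only [toObj]
  exact comp_id _

lemma fromObj_Q (X : C) : fromObj W₀ (W₀.Q.obj X) = W₀.Q.map (0 : X ⟶ (0 : C)) := by
  dsimp only [fromObj]
  exact id_comp _

lemma toObj_comp {A B : W₀.Localization} (φ : A ⟶ B) : toObj W₀ A ≫ φ = toObj W₀ B := by
  let P : MorphismProperty W₀.Localization := fun A B φ => toObj W₀ A ≫ φ = toObj W₀ B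
  letI : P.IsStableUnderComposition :=
    ⟨fun f g hf hg => by dsimp only [P] at hf hg ⊢; rw [← assoc, hf, hg]⟩
  have htop := Localization.Construction.morphismProperty_eq_top' P
    (fun X Y f => by
      dsimp only [P]
      rw [toObj_Q, toObj_Q, ← Functor.map_comp, zero_comp])
    (fun {A' B'} e h => by
      dsimp only [P] at h ⊢
      rw [← h, assoc, e.hom_inv_id, comp_id])
  have : P φ := by rw [htop]; trivial
  exact this

lemma fromObj_comp {A B : W₀.Localization} (φ : A ⟶ B) : φ ≫ fromObj W₀ B = fromObj W₀ A := by
  let P : MorphismProperty W₀.Localization := fun A B φ => φ ≫ fromObj W₀ B = fromObj W₀ A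
  letI : P.IsStableUnderComposition :=
    ⟨fun f g hf hg => by dsimp only [P] at hf hg ⊢; rw [assoc, hg, hf]⟩
  have htop := Localization.Construction.morphismProperty_eq_top' P
    (fun X Y f => by
      dsimp only [P]
      rw [fromObj_Q, fromObj_Q, ← Functor.map_comp, comp_zero])
    (fun {A' B'} e h => by
      dsimp only [P] at h ⊢
      rw [← h, ← assoc, e.inv_hom_id, id_comp])
  have : P φ := by rw [htop]; trivial
  exact this

lemma toObj_zero : toObj W₀ (W₀.Q.obj (0 : C)) = 𝟙 _ := by
  rw [toObj_Q, ← Limits.id_zero, CategoryTheory.Functor.map_id]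

lemma fromObj_zero : fromObj W₀ (W₀.Q.obj (0 : C)) = 𝟙 _ := by
  rw [fromObj_Q, ← Limits.id_zero, CategoryTheory.Functor.map_id]

lemma isZero_Q_obj_zero : IsZero (W₀.Q.obj (0 : C)) := by
  constructor
  · intro A
    refine ⟨⟨⟨toObj W₀ A⟩, fun φ => ?_⟩⟩
    have h := toObj_comp W₀ φ
    rwa [toObj_zero, id_comp] at h
  · intro A
    refine ⟨⟨⟨fromObj W₀ A⟩, fun φ => ?_⟩⟩
    have h := fromObj_comp W₀ φ
    rwa [fromObj_zero, comp_id] at h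

end ZeroLocalization

namespace IsNullSystem

variable {N : Set C} (hN : IsNullSystem N)
include hN

lemma isZero_of_mem {X : C} (hX : X ∈ N) : IsZero ((coneClass N).Q.obj X) :=
  (isZero_Q_obj_zero (coneClass N)).of_iso
    (Localization.Construction.wIso (0 : X ⟶ 0) (hN.coneClass_to_zero hX))

lemma mem_of_isZero {X : C} (hX : IsZero ((coneClass N).Q.obj X)) : X ∈ N := by
  letI : (mclosure (coneClass N)).HasLeftCalculusOfFractions :=
    hN.mclosure_hasLeftCalculusOfFractions
  have h0 : (coneClass N).Q.map (𝟙 X) = (coneClass N).Q.map (0 : X ⟶ X) := hX.eq_of_src _ _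
  have hinv : (coneClass N).IsInvertedBy (mclosure (coneClass N)).Q := fun _ _ f hf =>
    Localization.inverts (mclosure (coneClass N)).Q (mclosure (coneClass N)) f
      (mclosure.of_mem hf)
  have fac : (coneClass N).Q ⋙ Localization.Construction.lift _ hinv =
      (mclosure (coneClass N)).Q := Localization.Construction.fac _ _
  have hQ' : (mclosure (coneClass N)).Q.map (𝟙 X) =
      (mclosure (coneClass N)).Q.map (0 : X ⟶ X) := by
    have h1 := Functor.congr_hom fac.symm (𝟙 X)
    have h2 := Functor.congr_hom fac.symm (0 : X ⟶ X)
    rw [h1, h2, Functor.comp_map, Functor.comp_map, h0]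
  obtain ⟨Z, s, hs, hfac⟩ :=
    (MorphismProperty.map_eq_iff_postcomp (mclosure (coneClass N)).Q
      (mclosure (coneClass N)) (𝟙 X) (0 : X ⟶ X)).1 hQ'
  rw [id_comp, zero_comp] at hfac
  obtain ⟨n, hchain⟩ := hs
  exact hN.mem_of_chain_factor n s hchain hN.zero (0 : X ⟶ 0) (0 : (0 : C) ⟶ Z)
    (by rw [hfac, comp_zero])

end IsNullSystem


section PartTwo

variable (S : MorphismProperty C) [SSystem S]

noncomputable example : Pretriangulated S.Localization := inferInstance

example : S.Q.IsTriangulated := inferInstance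

theorem part2 : coneClass {X : C | IsZero (S.Q.obj X)} = S := by
  funext X Y f
  apply propext
  constructor
  · rintro ⟨Z, g, h, hT, hZ⟩
    rw [SSystem.saturated (S := S) f]
    have hmap := S.Q.map_distinguished _ hT
    have : IsIso (S.Q.mapTriangle.obj (Triangle.mk f g h)).mor₁ :=
      ((S.Q.mapTriangle.obj (Triangle.mk f g h)).isZero₃_iff_isIso₁ hmap).1 hZ
    exact this
  · intro hf
    obtain ⟨Z, g, h, hT⟩ := distinguished_cocone_triangle f
    refine ⟨Z, g, h, hT, ?_⟩
    have hmap := S.Q.map_distinguished _ hT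
    have : IsIso (S.Q.mapTriangle.obj (Triangle.mk f g h)).mor₁ := by
      change IsIso (S.Q.map f)
      exact (SSystem.saturated (S := S) f).1 hf
    exact Triangle.isZero₃_of_isIso₁ _ hmap this

end PartTwo

/-- A1.1.8: `N ↦ S(N)` and `S ↦ N(S)` are mutually inverse bijections between null
systems and S-systems in a triangulated category. -/
theorem nullSystem_sSystem_bijection :
    (∀ N : Set C, IsNullSystem N → {X : C | IsZero ((coneClass N).Q.obj X)} = N) ∧
    (∀ S : MorphismProperty C, SSystem S → coneClass {X : C | IsZero (S.Q.obj X)} = S) := by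
  constructor
  · intro N hN
    ext X
    exact ⟨fun hX => hN.mem_of_isZero hX, fun hX => hN.isZero_of_mem hX⟩
  · intro S hS
    exact part2 S
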